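/- arXiv:1503.01248 — 4 statements merged into one kernel-verified Lean document; each statement's English description precedes it below -/
import Mathlib

section
/- Let p, q, r be real polynomials in one variable such that r(t) ≠ 0 and p(t)² + q(t)² = r(t)² for every t ∈ [−1,1]. Define φ : S² → ℝ³ by φ(x,y,z) = ((p(z)x − q(z)y)/r(z), (q(z)x + p(z)y)/r(z), z). Then φ maps S² into S², φ is a bijection of S² onto itself, and its inverse is the map ψ(x,y,z) = ((p(z)x + q(z)y)/r(z), (−q(z)x + p(z)y)/r(z), z), i.e. the twisting map built from (p, −q, r). In particular φ is a birational diffeomorphism of S². -/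
open Polynomial

/-- The unit sphere `S² = {(x,y,z) ∈ ℝ³ : x² + y² + z² = 1}`,
with points written as functions `Fin 3 → ℝ`. -/
def sphere2 : Set (Fin 3 → ℝ) := {v | v 0 ^ 2 + v 1 ^ 2 + v 2 ^ 2 = 1}

/-- The twisting map of `S²` associated to a triple `(p, q, r)` of real polynomials:
`(x, y, z) ↦ ((p(z)x − q(z)y)/r(z), (q(z)x + p(z)y)/r(z), z)`. -/
noncomputable def twist (p q r : Polynomial ℝ) (v : Fin 3 → ℝ) : Fin 3 → ℝ :=
  ![(p.eval (v 2) * v 0 - q.eval (v 2) * v 1) / r.eval (v 2),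
    (q.eval (v 2) * v 0 + p.eval (v 2) * v 1) / r.eval (v 2),
    v 2]

/-- `φ` is given on `S²` by polynomial fractions `Fᵢ/G`, where the denominator `G`
does not vanish at any point of `S²`. -/
def HasRegularRep (φ : (Fin 3 → ℝ) → (Fin 3 → ℝ)) : Prop :=
  ∃ (F : Fin 3 → MvPolynomial (Fin 3) ℝ) (G : MvPolynomial (Fin 3) ℝ),
    (∀ v ∈ sphere2, MvPolynomial.eval v G ≠ 0) ∧
    ∀ v ∈ sphere2, ∀ i, φ v i = MvPolynomial.eval v (F i) / MvPolynomial.eval v G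

/-- A birational diffeomorphism of `S²`: a bijection of `S²` onto itself which is given
on `S²` by polynomial fractions with nonvanishing denominator, and whose inverse admits a
representation of the same form. -/
def IsBirationalDiffeo (φ : (Fin 3 → ℝ) → (Fin 3 → ℝ)) : Prop :=
  Set.BijOn φ sphere2 sphere2 ∧ HasRegularRep φ ∧
    ∃ ψ : (Fin 3 → ℝ) → (Fin 3 → ℝ),
      Set.InvOn ψ φ sphere2 sphere2 ∧ HasRegularRep ψ

lemma memIcc (v : Fin 3 → ℝ) (hv : v ∈ sphere2) : v 2 ∈ Set.Icc (-1:ℝ) 1 := by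
  have h : v 0 ^ 2 + v 1 ^ 2 + v 2 ^ 2 = 1 := hv
  constructor <;> nlinarith [sq_nonneg (v 0), sq_nonneg (v 1), sq_nonneg (v 2 + 1), sq_nonneg (v 2 - 1)]

lemma eval_aeval (v : Fin 3 → ℝ) (p : ℝ[X]) :
    MvPolynomial.eval v (Polynomial.aeval (MvPolynomial.X 2 : MvPolynomial (Fin 3) ℝ) p)
      = p.eval (v 2) := by
  have := Polynomial.aeval_algHom_apply (MvPolynomial.aeval v : MvPolynomial (Fin 3) ℝ →ₐ[ℝ] ℝ)
    (MvPolynomial.X 2) p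
  simpa using this.symm

lemma mapsTo_twist (p q r : Polynomial ℝ)
    (hr : ∀ t ∈ Set.Icc (-1 : ℝ) 1, r.eval t ≠ 0)
    (hpqr : ∀ t ∈ Set.Icc (-1 : ℝ) 1, p.eval t ^ 2 + q.eval t ^ 2 = r.eval t ^ 2) :
    Set.MapsTo (twist p q r) sphere2 sphere2 := by
  intro v hv
  have hz := memIcc v hv
  have hr' := hr _ hz
  have hsum : v 0 ^ 2 + v 1 ^ 2 + v 2 ^ 2 = 1 := hv
  show _ ^ 2 + _ ^ 2 + _ ^ 2 = 1
  simp only [twist, Matrix.cons_val_zero, Matrix.cons_val_one, Matrix.head_cons,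
    Matrix.cons_val_two, Matrix.tail_cons]
  field_simp
  linear_combination (v 0 ^ 2 + v 1 ^ 2) * hpqr _ hz + (r.eval (v 2)) ^ 2 * hsum

lemma leftInv_twist (p q r : Polynomial ℝ)
    (hr : ∀ t ∈ Set.Icc (-1 : ℝ) 1, r.eval t ≠ 0)
    (hpqr : ∀ t ∈ Set.Icc (-1 : ℝ) 1, p.eval t ^ 2 + q.eval t ^ 2 = r.eval t ^ 2) :
    ∀ v ∈ sphere2, twist p (-q) r (twist p q r v) = v := by
  intro v hv
  have hz := memIcc v hv
  have hr' := hr _ hz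
  have hpq := hpqr _ hz
  funext i
  fin_cases i <;>
    simp only [twist, Matrix.cons_val_zero, Matrix.cons_val_one, Matrix.head_cons,
      Matrix.cons_val_two, Matrix.tail_cons, Polynomial.eval_neg, Fin.isValue, Fin.zero_eta, Fin.mk_one]
  · field_simp
    linear_combination v 0 * hpq
  · field_simp
    linear_combination v 1 * hpq
  · rfl

lemma regRep_twist (p q r : Polynomial ℝ)
    (hr : ∀ t ∈ Set.Icc (-1 : ℝ) 1, r.eval t ≠ 0) :
    HasRegularRep (twist p q r) := by
  set A : MvPolynomial (Fin 3) ℝ := Polynomial.aeval (MvPolynomial.X 2) p with hA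
  set B : MvPolynomial (Fin 3) ℝ := Polynomial.aeval (MvPolynomial.X 2) q with hB
  set G : MvPolynomial (Fin 3) ℝ := Polynomial.aeval (MvPolynomial.X 2) r with hG
  refine ⟨![A * MvPolynomial.X 0 - B * MvPolynomial.X 1,
            B * MvPolynomial.X 0 + A * MvPolynomial.X 1,
            MvPolynomial.X 2 * G], G, ?_, ?_⟩
  · intro v hv
    rw [hG, eval_aeval]
    exact hr _ (memIcc v hv)
  · intro v hv i
    have hrv : r.eval (v 2) ≠ 0 := hr _ (memIcc v hv)
    fin_cases i <;>
      simp [twist, hA, hB, hG, eval_aeval, mul_div_assoc] <;>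
      field_simp

/-- if `r` does not vanish on `[−1,1]` and `p² + q² = r²` on `[−1,1]`, then the
twisting map `φ` built from `(p, q, r)` maps `S²` into `S²`, is a bijection of `S²` onto
itself, its inverse is the twisting map built from `(p, −q, r)`, and `φ` is a birational
diffeomorphism of `S²`. -/
theorem stmt0 (p q r : Polynomial ℝ)
    (hr : ∀ t ∈ Set.Icc (-1 : ℝ) 1, r.eval t ≠ 0)
    (hpqr : ∀ t ∈ Set.Icc (-1 : ℝ) 1, p.eval t ^ 2 + q.eval t ^ 2 = r.eval t ^ 2) :
    Set.MapsTo (twist p q r) sphere2 sphere2 ∧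
    Set.BijOn (twist p q r) sphere2 sphere2 ∧
    Set.InvOn (twist p (-q) r) (twist p q r) sphere2 sphere2 ∧
    IsBirationalDiffeo (twist p q r) := by
  have hpqr' : ∀ t ∈ Set.Icc (-1 : ℝ) 1,
      p.eval t ^ 2 + (-q).eval t ^ 2 = r.eval t ^ 2 := by
    intro t ht
    simpa using hpqr t ht
  have h1 := mapsTo_twist p q r hr hpqr
  have h2 := mapsTo_twist p (-q) r hr hpqr'
  have hinv : Set.InvOn (twist p (-q) r) (twist p q r) sphere2 sphere2 := by
    constructor
    · intro v hv; exact leftInv_twist p q r hr hpqr v hv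
    · intro v hv
      have := leftInv_twist p (-q) r hr hpqr' v hv
      rwa [neg_neg] at this
  have hbij := hinv.bijOn h1 h2
  exact ⟨h1, hbij, hinv, hbij, regRep_twist p q r hr,
    ⟨twist p (-q) r, hinv, regRep_twist p (-q) r hr⟩⟩
end

section
/- Let z₁, …, zₙ be pairwise distinct points of the interval [−1,1] and let (a₁,b₁), …, (aₙ,bₙ) ∈ ℝ² satisfy aⱼ² + bⱼ² = 1 for every j. Then there exist real polynomials p, q, r in one variable such that r(t) ≠ 0 for all t ∈ [−1,1], p² + q² = r² as a polynomial identity, and p(zⱼ) = aⱼ·r(zⱼ) and q(zⱼ) = bⱼ·r(zⱼ) for every j = 1, …, n. In other words, there is a rational map from [−1,1] to the unit circle, without poles on [−1,1], taking prescribed values at finitely many prescribed points. -/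
open Polynomial

/-- given pairwise distinct points `z₁, …, zₙ ∈ [−1,1]` and points
`(a₁,b₁), …, (aₙ,bₙ)` on the unit circle, there is a rational map `(p/r, q/r)` from
`[−1,1]` to the unit circle, without poles on `[−1,1]` (i.e. `r` does not vanish there),
with `p² + q² = r²` as a polynomial identity, taking the prescribed values at the
prescribed points: `p(zⱼ) = aⱼ r(zⱼ)` and `q(zⱼ) = bⱼ r(zⱼ)` for all `j`. -/
theorem stmt1 (n : ℕ) (z : Fin n → ℝ) (hz : ∀ j, z j ∈ Set.Icc (-1 : ℝ) 1)
    (hzinj : Function.Injective z)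
    (a b : Fin n → ℝ) (hab : ∀ j, a j ^ 2 + b j ^ 2 = 1) :
    ∃ p q r : Polynomial ℝ,
      (∀ t ∈ Set.Icc (-1 : ℝ) 1, r.eval t ≠ 0) ∧
      p ^ 2 + q ^ 2 = r ^ 2 ∧
      ∀ j, p.eval (z j) = a j * r.eval (z j) ∧ q.eval (z j) = b j * r.eval (z j) := by
  classical
  -- Step 1: choose a rotation (c,d) on the circle such that no (a j, b j) equals (-c,-d)
  obtain ⟨c, d, hcd, hgood⟩ :
      ∃ c d : ℝ, c ^ 2 + d ^ 2 = 1 ∧ ∀ j, ¬(a j = -c ∧ b j = -d) := by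
    have hsub : ∀ j : Fin n,
        {t : ℝ | (1 - t^2)/(1+t^2) = -(a j) ∧ 2*t/(1+t^2) = -(b j)}.Subsingleton := by
      intro j s hs t ht
      simp only [Set.mem_setOf_eq] at hs ht
      have hps : (0:ℝ) < 1 + s^2 := by positivity
      have hpt : (0:ℝ) < 1 + t^2 := by positivity
      have h1 : (1 - s^2) * (1 + t^2) = (1 - t^2) * (1 + s^2) := by
        have h := hs.1.trans ht.1.symm
        field_simp at h
        linarith [h]
      have h2 : (2*s) * (1 + t^2) = (2*t) * (1 + s^2) := by
        have h := hs.2.trans ht.2.symm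
        field_simp at h
        linarith [h]
      have hsq : (s - t) * (s + t) = 0 := by nlinarith [h1]
      rcases mul_eq_zero.mp hsq with h | h
      · linarith
      · have hst : s = -t := by linarith
        have h2' := h2
        rw [hst] at h2'
        have ht0 : t * (1 + t^2) = 0 := by linear_combination (-(1:ℝ)/4) * h2'
        have ht1 : t = 0 := by
          rcases mul_eq_zero.mp ht0 with h' | h'
          · exact h'
          · linarith
        rw [hst, ht1]; simp
    have hfin : (⋃ j : Fin n,
        {t : ℝ | (1 - t^2)/(1+t^2) = -(a j) ∧ 2*t/(1+t^2) = -(b j)}).Finite :=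
      Set.finite_iUnion fun j => (hsub j).finite
    obtain ⟨t, ht⟩ := hfin.infinite_compl.nonempty
    have hpt : (0:ℝ) < 1 + t^2 := by positivity
    refine ⟨(1 - t^2)/(1+t^2), 2*t/(1+t^2), by field_simp; ring, ?_⟩
    intro j ⟨h1, h2⟩
    apply ht
    refine Set.mem_iUnion.mpr ⟨j, ?_⟩
    simp only [Set.mem_setOf_eq]
    constructor
    · rw [← neg_eq_iff_eq_neg]; linarith [h1]
    · rw [← neg_eq_iff_eq_neg]; linarith [h2]
  -- Step 2: the rotated points avoid (-1, 0), so half-angle values exist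
  have hA1 : ∀ j, 1 + (c * a j + d * b j) ≠ 0 := by
    intro j hj
    have hAj : c * a j + d * b j = -1 := by linarith
    have hBj : c * b j - d * a j = 0 := by
      have hsq : (c * b j - d * a j) ^ 2 = 0 := by nlinarith [hab j, hcd, hAj]
      exact pow_eq_zero_iff (n := 2) (by norm_num) |>.mp hsq
    exact hgood j ⟨by linear_combination c * hAj - d * hBj - a j * hcd,
      by linear_combination d * hAj + c * hBj - b j * hcd⟩
  have hkey : ∀ j, ∃ w : ℝ,
      (c * a j + d * b j) * (1 + w ^ 2) = 1 - w ^ 2 ∧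
      (c * b j - d * a j) * (1 + w ^ 2) = 2 * w := by
    intro j
    set A : ℝ := c * a j + d * b j with hAdef
    set B : ℝ := c * b j - d * a j with hBdef
    have hAB : A ^ 2 + B ^ 2 = 1 := by
      rw [hAdef, hBdef]
      linear_combination (a j ^ 2 + b j ^ 2) * hcd + hab j
    have hA : (1 : ℝ) + A ≠ 0 := hA1 j
    refine ⟨B / (1 + A), ?_, ?_⟩
    · field_simp
      nlinarith [hAB]
    · field_simp
      linear_combination B * hAB
  choose u hu1 hu2 using hkey
  -- Step 3: interpolate and build the map
  set U : Polynomial ℝ := Lagrange.interpolate Finset.univ z u with hUdef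
  have hU : ∀ j, U.eval (z j) = u j := fun j =>
    Lagrange.eval_interpolate_at_node u (hzinj.injOn) (Finset.mem_univ j)
  have hC : (C c) ^ 2 + (C d) ^ 2 = (1 : Polynomial ℝ) := by
    rw [← C_pow, ← C_pow, ← C_add, hcd, C_1]
  refine ⟨C c * (1 - U ^ 2) - C d * (2 * U), C d * (1 - U ^ 2) + C c * (2 * U),
    1 + U ^ 2, ?_, ?_, ?_⟩
  · intro s _
    simp only [eval_add, eval_one, eval_pow]
    positivity
  · linear_combination ((1 + U ^ 2) ^ 2 : Polynomial ℝ) * hC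
  · intro j
    constructor
    · simp only [eval_sub, eval_add, eval_mul, eval_C, eval_one, eval_pow, eval_ofNat, hU]
      linear_combination (-c) * hu1 j + d * hu2 j + a j * (1 + u j ^ 2) * hcd
    · simp only [eval_sub, eval_add, eval_mul, eval_C, eval_one, eval_pow, eval_ofNat, hU]
      linear_combination (-d) * hu1 j + (-c) * hu2 j + b j * (1 + u j ^ 2) * hcd
end

section
/- Let z₁, …, zₙ ∈ (−1,1) be pairwise distinct, and for each j let Pⱼ = (xⱼ, yⱼ, zⱼ) and Rⱼ = (x′ⱼ, y′ⱼ, zⱼ) be points of S² having the same third coordinate zⱼ. Then there exist real polynomials p, q, r in one variable with r(t) ≠ 0 for all t ∈ [−1,1] and p(t)² + q(t)² = r(t)² for all t ∈ [−1,1], such that the associated twisting map φ(x,y,z) = ((p(z)x − q(z)y)/r(z), (q(z)x + p(z)y)/r(z), z) is a bijection of S² satisfying φ(Pⱼ) = Rⱼ for every j = 1, …, n. -/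
open Polynomial

lemma key_rot (a b a' b' : ℝ) (hρ : a ^ 2 + b ^ 2 = a' ^ 2 + b' ^ 2)
    (hpos : a ^ 2 + b ^ 2 ≠ 0) :
    ∃ s : ℝ,
      ((1 - s ^ 2) ^ 2 - 4 * s ^ 2) * a - 4 * s * (1 - s ^ 2) * b
          = (1 + s ^ 2) ^ 2 * a' ∧
      4 * s * (1 - s ^ 2) * a + ((1 - s ^ 2) ^ 2 - 4 * s ^ 2) * b
          = (1 + s ^ 2) ^ 2 * b' := by
  set w : ℂ := a + b * Complex.I with hwdef
  set w' : ℂ := a' + b' * Complex.I with hw'def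
  have hwre : w.re = a := by simp [hwdef]
  have hwim : w.im = b := by simp [hwdef]
  have hw're : w'.re = a' := by simp [hw'def]
  have hw'im : w'.im = b' := by simp [hw'def]
  have hnw : Complex.normSq w = a ^ 2 + b ^ 2 := by
    simp [Complex.normSq_apply, hwre, hwim]; ring
  have hnw' : Complex.normSq w' = a' ^ 2 + b' ^ 2 := by
    simp [Complex.normSq_apply, hw're, hw'im]; ring
  have hw : w ≠ 0 := by
    intro h
    rw [h] at hnw
    simp at hnw
    exact hpos hnw.symm
  set u : ℂ := w' / w with hudef
  have hu : Complex.normSq u = 1 := by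
    rw [hudef, Complex.normSq_div, hnw, hnw', ← hρ]
    field_simp
  obtain ⟨v0, hv0⟩ := IsAlgClosed.exists_pow_nat_eq (k := ℂ) u zero_lt_two
  set v : ℂ := if 0 ≤ v0.re then v0 else -v0 with hvdef
  have hv : v ^ 2 = u := by
    rw [hvdef]; split_ifs with h
    · exact hv0
    · rw [neg_pow]; simpa using hv0
  have hvre : 0 ≤ v.re := by
    rw [hvdef]; split_ifs with h
    · exact h
    · simp; linarith
  have hnv : v.re ^ 2 + v.im ^ 2 = 1 := by
    have h1 : Complex.normSq v ^ 2 = 1 := by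
      rw [← map_pow Complex.normSq, hv, hu]
    have h2 : 0 ≤ Complex.normSq v := Complex.normSq_nonneg v
    have h3 : Complex.normSq v = 1 := by nlinarith
    rw [Complex.normSq_apply] at h3
    nlinarith [h3]
  set c := v.re with hc
  set d := v.im with hd
  have h1c : (0:ℝ) < 1 + c := by linarith
  have h1c' : (1:ℝ) + c ≠ 0 := ne_of_gt h1c
  set s := d / (1 + c) with hsdef
  have h1 : 1 - s ^ 2 = (1 + s ^ 2) * c := by
    rw [hsdef]; field_simp; linear_combination -(1 + c) * hnv
  have h2 : 2 * s = (1 + s ^ 2) * d := by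
    rw [hsdef]; field_simp; linear_combination (-d) * hnv
  -- extract real equations from v^2 * w = w'
  have hv2w : v ^ 2 * w = w' := by rw [hv, hudef, div_mul_cancel₀ _ hw]
  have hre : (c ^ 2 - d ^ 2) * a - 2 * c * d * b = a' := by
    have := congrArg Complex.re hv2w
    simp [pow_two, Complex.mul_re, Complex.mul_im, hwre, hwim, hw're, ← hc, ← hd] at this
    linear_combination this
  have him : 2 * c * d * a + (c ^ 2 - d ^ 2) * b = b' := by
    have := congrArg Complex.im hv2w
    simp [pow_two, Complex.mul_re, Complex.mul_im, hwre, hwim, hw'im, ← hc, ← hd] at this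
    linear_combination this
  have ha : (1 - s ^ 2) ^ 2 - 4 * s ^ 2 = (1 + s ^ 2) ^ 2 * (c ^ 2 - d ^ 2) := by
    linear_combination (1 - s ^ 2 + (1 + s ^ 2) * c) * h1 - (2 * s + (1 + s ^ 2) * d) * h2
  have hb : 4 * s * (1 - s ^ 2) = (1 + s ^ 2) ^ 2 * (2 * c * d) := by
    linear_combination 2 * (1 - s ^ 2) * h2 + 2 * (1 + s ^ 2) * d * h1
  refine ⟨s, ?_, ?_⟩
  · rw [ha, hb]; linear_combination (1 + s ^ 2) ^ 2 * hre
  · rw [ha, hb]; linear_combination (1 + s ^ 2) ^ 2 * him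

lemma twist_twist (p q r : Polynomial ℝ)
    (hr : ∀ t, r.eval t ≠ 0) (hpq : ∀ t, p.eval t ^ 2 + q.eval t ^ 2 = r.eval t ^ 2)
    (v : Fin 3 → ℝ) : twist p (-q) r (twist p q r v) = v := by
  have hr' := hr (v 2)
  have h := hpq (v 2)
  funext i
  fin_cases i <;>
    simp only [twist, Matrix.cons_val_zero, Matrix.cons_val_one, Matrix.head_cons,
      Matrix.cons_val_two, Matrix.tail_cons, eval_neg, Fin.isValue, Fin.zero_eta, Fin.mk_one]
  · field_simp
    ring_nf
    linear_combination (v 0) * h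
  · field_simp
    ring_nf
    linear_combination (v 1) * h
  · rfl

lemma twist_mapsTo (p q r : Polynomial ℝ)
    (hr : ∀ t, r.eval t ≠ 0) (hpq : ∀ t, p.eval t ^ 2 + q.eval t ^ 2 = r.eval t ^ 2) :
    Set.MapsTo (twist p q r) sphere2 sphere2 := by
  intro v hv
  have hr' := hr (v 2)
  have h := hpq (v 2)
  simp only [sphere2, Set.mem_setOf_eq] at hv ⊢
  simp only [twist, Matrix.cons_val_zero, Matrix.cons_val_one, Matrix.head_cons,
    Matrix.cons_val_two, Matrix.tail_cons, Fin.isValue]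
  field_simp
  linear_combination (r.eval (v 2)) ^ 2 * hv + ((v 0) ^ 2 + (v 1) ^ 2) * h

lemma twist_bijOn (p q r : Polynomial ℝ)
    (hr : ∀ t, r.eval t ≠ 0) (hpq : ∀ t, p.eval t ^ 2 + q.eval t ^ 2 = r.eval t ^ 2) :
    Set.BijOn (twist p q r) sphere2 sphere2 := by
  have hpq' : ∀ t, p.eval t ^ 2 + (-q).eval t ^ 2 = r.eval t ^ 2 := by
    intro t; simp only [eval_neg, neg_sq]; exact hpq t
  have hinv : Set.InvOn (twist p (-q) r) (twist p q r) sphere2 sphere2 := by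
    constructor
    · intro v _; exact twist_twist p q r hr hpq v
    · intro v _
      have := twist_twist p (-q) r hr hpq' v
      rwa [neg_neg] at this
  exact Set.InvOn.bijOn hinv (twist_mapsTo p q r hr hpq) (twist_mapsTo p (-q) r hr hpq')

/-- given pairwise distinct `z₁, …, zₙ ∈ (−1,1)` and points
`Pⱼ = (xⱼ, yⱼ, zⱼ)`, `Rⱼ = (x′ⱼ, y′ⱼ, zⱼ)` of `S²` with the same third coordinate `zⱼ`,
there are real polynomials `p, q, r` with `r` nonvanishing on `[−1,1]` and
`p² + q² = r²` on `[−1,1]`, whose associated twisting map is a bijection of `S²`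
sending `Pⱼ` to `Rⱼ` for every `j`. -/
theorem stmt2 (n : ℕ) (z : Fin n → ℝ) (hz : ∀ j, z j ∈ Set.Ioo (-1 : ℝ) 1)
    (hzinj : Function.Injective z)
    (P R : Fin n → (Fin 3 → ℝ))
    (hP : ∀ j, P j ∈ sphere2) (hR : ∀ j, R j ∈ sphere2)
    (hPz : ∀ j, P j 2 = z j) (hRz : ∀ j, R j 2 = z j) :
    ∃ p q r : Polynomial ℝ,
      (∀ t ∈ Set.Icc (-1 : ℝ) 1, r.eval t ≠ 0) ∧
      (∀ t ∈ Set.Icc (-1 : ℝ) 1, p.eval t ^ 2 + q.eval t ^ 2 = r.eval t ^ 2) ∧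
      Set.BijOn (twist p q r) sphere2 sphere2 ∧
      ∀ j, twist p q r (P j) = R j := by
  classical
  -- per-point data
  have hkey : ∀ j : Fin n, ∃ s : ℝ,
      ((1 - s ^ 2) ^ 2 - 4 * s ^ 2) * P j 0 - 4 * s * (1 - s ^ 2) * P j 1
          = (1 + s ^ 2) ^ 2 * R j 0 ∧
      4 * s * (1 - s ^ 2) * P j 0 + ((1 - s ^ 2) ^ 2 - 4 * s ^ 2) * P j 1
          = (1 + s ^ 2) ^ 2 * R j 1 := by
    intro j
    have hPj := hP j
    have hRj := hR j
    simp only [sphere2, Set.mem_setOf_eq] at hPj hRj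
    obtain ⟨hz1, hz2⟩ := hz j
    apply key_rot
    · rw [hPz j] at hPj; rw [hRz j] at hRj; linarith
    · rw [hPz j] at hPj
      have : P j 0 ^ 2 + P j 1 ^ 2 = 1 - z j ^ 2 := by linarith
      rw [this]
      nlinarith
  choose sv hsv1 hsv2 using hkey
  set S : Polynomial ℝ := Lagrange.interpolate Finset.univ z sv with hSdef
  have hSeval : ∀ j, S.eval (z j) = sv j := by
    intro j
    exact Lagrange.eval_interpolate_at_node sv (Set.injOn_of_injective hzinj)
      (Finset.mem_univ j)
  have hpe : ∀ t : ℝ, ((1 - S ^ 2) ^ 2 - 4 * S ^ 2 : Polynomial ℝ).eval t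
      = (1 - S.eval t ^ 2) ^ 2 - 4 * S.eval t ^ 2 := by intro t; simp
  have hqe : ∀ t : ℝ, (4 * S * (1 - S ^ 2) : Polynomial ℝ).eval t
      = 4 * S.eval t * (1 - S.eval t ^ 2) := by intro t; simp
  have hre : ∀ t : ℝ, ((1 + S ^ 2) ^ 2 : Polynomial ℝ).eval t
      = (1 + S.eval t ^ 2) ^ 2 := by intro t; simp
  have hrne : ∀ t : ℝ, ((1 + S ^ 2) ^ 2 : Polynomial ℝ).eval t ≠ 0 := by
    intro t; rw [hre]; positivity
  have hpqr : ∀ t : ℝ, ((1 - S ^ 2) ^ 2 - 4 * S ^ 2 : Polynomial ℝ).eval t ^ 2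
      + (4 * S * (1 - S ^ 2) : Polynomial ℝ).eval t ^ 2
      = ((1 + S ^ 2) ^ 2 : Polynomial ℝ).eval t ^ 2 := by
    intro t; rw [hpe, hqe, hre]; ring
  refine ⟨(1 - S ^ 2) ^ 2 - 4 * S ^ 2, 4 * S * (1 - S ^ 2), (1 + S ^ 2) ^ 2, ?_, ?_, ?_, ?_⟩
  · intro t _; exact hrne t
  · intro t _; exact hpqr t
  · exact twist_bijOn _ _ _ hrne hpqr
  · intro j
    have hdne : ((1:ℝ) + sv j ^ 2) ^ 2 ≠ 0 := by positivity
    have h0 : twist ((1 - S ^ 2) ^ 2 - 4 * S ^ 2) (4 * S * (1 - S ^ 2)) ((1 + S ^ 2) ^ 2)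
        (P j) 0 = R j 0 := by
      simp only [twist, Matrix.cons_val_zero]
      rw [hPz j, hpe, hqe, hre, hSeval j, div_eq_iff hdne]
      linear_combination hsv1 j
    have h1 : twist ((1 - S ^ 2) ^ 2 - 4 * S ^ 2) (4 * S * (1 - S ^ 2)) ((1 + S ^ 2) ^ 2)
        (P j) 1 = R j 1 := by
      simp only [twist, Matrix.cons_val_one, Matrix.head_cons, Matrix.cons_val_zero]
      rw [hPz j, hpe, hqe, hre, hSeval j, div_eq_iff hdne]
      linear_combination hsv2 j
    have h2 : twist ((1 - S ^ 2) ^ 2 - 4 * S ^ 2) (4 * S * (1 - S ^ 2)) ((1 + S ^ 2) ^ 2)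
        (P j) 2 = R j 2 := by
      simp only [twist, Matrix.cons_val_two, Matrix.tail_cons, Matrix.head_cons]
      rw [hPz j, hRz j]
    funext i
    fin_cases i
    · exact h0
    · exact h1
    · exact h2
end

section
/- Define G : ℝ³ → ℝ by G(x,y,z) = z²·(x² + y²((y − z²)² + y z³))/(x² + y⁴ + y² z⁴) for (x,y) ≠ (0,0), and G(0,0,z) = z² for all z. Then: (i) G is continuous on ℝ³ (so G is a regulous function, being rational off the z-axis); (ii) the zero set of G equals {(x,y,z) ∈ ℝ³ : z = 0} ∪ (U \ L), where U = {(x,y,z) ∈ ℝ³ : x² + y²((y − z²)² + y z³) = 0} is the horned umbrella and L = {(0,0,z) : z ∈ ℝ} is the z-axis; in particular the intersection of the zero set of G with U is (U \ L) ∪ {(0,0,0)}, the 'horn' of the umbrella. -/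
open Classical

/-- The regulous function exhibiting the horn of the horned umbrella:
`G(x,y,z) = z²(x² + y²((y − z²)² + yz³))/(x² + y⁴ + y²z⁴)` for `(x,y) ≠ (0,0)` and
`G(0,0,z) = z²`. -/
noncomputable def hornFun : ℝ × ℝ × ℝ → ℝ := fun w =>
  if w.1 = 0 ∧ w.2.1 = 0 then w.2.2 ^ 2
  else w.2.2 ^ 2 * (w.1 ^ 2 + w.2.1 ^ 2 * ((w.2.1 - w.2.2 ^ 2) ^ 2 + w.2.1 * w.2.2 ^ 3)) /
    (w.1 ^ 2 + w.2.1 ^ 4 + w.2.1 ^ 2 * w.2.2 ^ 4)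

/-- The horned umbrella `U = {(x,y,z) : x² + y²((y − z²)² + yz³) = 0}`. -/
def hornedUmbrella : Set (ℝ × ℝ × ℝ) :=
  {w | w.1 ^ 2 + w.2.1 ^ 2 * ((w.2.1 - w.2.2 ^ 2) ^ 2 + w.2.1 * w.2.2 ^ 3) = 0}

/-- The `z`-axis `L = {(0,0,z)}`, the stick of the umbrella. -/
def zAxis : Set (ℝ × ℝ × ℝ) := {w | w.1 = 0 ∧ w.2.1 = 0}

lemma Dpos (w : ℝ × ℝ × ℝ) (h : ¬(w.1 = 0 ∧ w.2.1 = 0)) :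
    0 < w.1 ^ 2 + w.2.1 ^ 4 + w.2.1 ^ 2 * w.2.2 ^ 4 := by
  rcases not_and_or.mp h with h | h
  · have : 0 < w.1 ^ 2 := by positivity
    nlinarith [sq_nonneg (w.2.1 ^ 2), sq_nonneg (w.2.1 * w.2.2 ^ 2)]
  · have : 0 < w.2.1 ^ 4 := by positivity
    nlinarith [sq_nonneg w.1, sq_nonneg (w.2.1 * w.2.2 ^ 2)]

lemma hornFun_bound (w : ℝ × ℝ × ℝ) :
    |hornFun w - w.2.2 ^ 2| ≤ |w.2.1| * |w.2.2 - 2| := by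
  by_cases h : w.1 = 0 ∧ w.2.1 = 0
  · simp [hornFun, h]
  · have hD := Dpos w h
    have hD' : w.1 ^ 2 + w.2.1 ^ 4 + w.2.1 ^ 2 * w.2.2 ^ 4 ≠ 0 := ne_of_gt hD
    have heq : hornFun w - w.2.2 ^ 2 =
        w.2.1 ^ 3 * w.2.2 ^ 4 * (w.2.2 - 2) /
          (w.1 ^ 2 + w.2.1 ^ 4 + w.2.1 ^ 2 * w.2.2 ^ 4) := by
      simp only [hornFun, if_neg h]
      rw [eq_div_iff hD', sub_mul, div_mul_cancel₀ _ hD']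
      ring
    rw [heq, abs_div, abs_of_pos hD, div_le_iff₀ hD]
    have h1 : |w.2.1 ^ 3 * w.2.2 ^ 4 * (w.2.2 - 2)| =
        |w.2.1| * |w.2.2 - 2| * (w.2.1 ^ 2 * w.2.2 ^ 4) := by
      rw [abs_mul, abs_mul]
      rw [show |w.2.1 ^ 3| = |w.2.1| * w.2.1 ^ 2 by
        rw [pow_succ' w.2.1 2, abs_mul, abs_pow, sq_abs]]
      rw [abs_pow]
      rw [show |w.2.2| ^ 4 = w.2.2 ^ 4 by rw [← abs_pow, abs_of_nonneg (by positivity)]]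
      ring
    rw [h1]
    have h2 : w.2.1 ^ 2 * w.2.2 ^ 4 ≤ w.1 ^ 2 + w.2.1 ^ 4 + w.2.1 ^ 2 * w.2.2 ^ 4 := by
      nlinarith [sq_nonneg w.1, sq_nonneg (w.2.1 ^ 2)]
    have h3 : (0:ℝ) ≤ |w.2.1| * |w.2.2 - 2| := by positivity
    nlinarith

/-- the function `hornFun` is continuous on `ℝ³` (hence regulous, being
rational off the `z`-axis); its zero set is `{z = 0} ∪ (U \ L)`, and the intersection of
its zero set with the horned umbrella `U` is the horn `(U \ L) ∪ {(0,0,0)}`. -/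
theorem stmt13 :
    Continuous hornFun ∧
    {w : ℝ × ℝ × ℝ | hornFun w = 0} = {w : ℝ × ℝ × ℝ | w.2.2 = 0} ∪ (hornedUmbrella \ zAxis) ∧
    {w : ℝ × ℝ × ℝ | hornFun w = 0} ∩ hornedUmbrella =
      (hornedUmbrella \ zAxis) ∪ {((0 : ℝ), (0 : ℝ), (0 : ℝ))} := by
  have hcont : Continuous hornFun := by
    rw [continuous_iff_continuousAt]
    intro w₀
    by_cases h : w₀.1 = 0 ∧ w₀.2.1 = 0
    · -- on the axis: squeeze
      have hval : hornFun w₀ = w₀.2.2 ^ 2 := by simp [hornFun, h]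
      rw [ContinuousAt, hval]
      have hz : Filter.Tendsto (fun w : ℝ × ℝ × ℝ => w.2.2 ^ 2) (nhds w₀)
          (nhds (w₀.2.2 ^ 2)) := by
        exact (continuous_snd.snd.pow 2).tendsto w₀
      have herr : Filter.Tendsto (fun w : ℝ × ℝ × ℝ => hornFun w - w.2.2 ^ 2) (nhds w₀)
          (nhds 0) := by
        apply squeeze_zero_norm (fun w => hornFun_bound w)
        have : Filter.Tendsto (fun w : ℝ × ℝ × ℝ => |w.2.1| * |w.2.2 - 2|) (nhds w₀)
            (nhds (|w₀.2.1| * |w₀.2.2 - 2|)) :=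
          ((continuous_snd.fst.abs).mul ((continuous_snd.snd.sub continuous_const).abs)).tendsto w₀
        simpa [h.2] using this
      have := hz.add herr
      simpa using this
    · -- off the axis
      have hopen : IsOpen {w : ℝ × ℝ × ℝ | ¬(w.1 = 0 ∧ w.2.1 = 0)} := by
        have : IsClosed {w : ℝ × ℝ × ℝ | w.1 = 0 ∧ w.2.1 = 0} :=
          (isClosed_eq continuous_fst continuous_const).inter
            (isClosed_eq continuous_snd.fst continuous_const)
        exact this.isOpen_compl
      have hev : ∀ᶠ w in nhds w₀, hornFun w =
          w.2.2 ^ 2 * (w.1 ^ 2 + w.2.1 ^ 2 * ((w.2.1 - w.2.2 ^ 2) ^ 2 + w.2.1 * w.2.2 ^ 3)) /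
            (w.1 ^ 2 + w.2.1 ^ 4 + w.2.1 ^ 2 * w.2.2 ^ 4) := by
        filter_upwards [hopen.mem_nhds h] with w hw
        simp [hornFun, if_neg hw]
      have hca : ContinuousAt (fun w : ℝ × ℝ × ℝ =>
          w.2.2 ^ 2 * (w.1 ^ 2 + w.2.1 ^ 2 * ((w.2.1 - w.2.2 ^ 2) ^ 2 + w.2.1 * w.2.2 ^ 3)) /
            (w.1 ^ 2 + w.2.1 ^ 4 + w.2.1 ^ 2 * w.2.2 ^ 4)) w₀ := by
        apply ContinuousAt.div
        · fun_prop
        · fun_prop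
        · exact ne_of_gt (Dpos w₀ h)
      exact hca.congr (Filter.EventuallyEq.symm hev)
  have hzero : {w : ℝ × ℝ × ℝ | hornFun w = 0} =
      {w : ℝ × ℝ × ℝ | w.2.2 = 0} ∪ (hornedUmbrella \ zAxis) := by
    ext w
    by_cases h : w.1 = 0 ∧ w.2.1 = 0
    · simp only [Set.mem_setOf_eq, Set.mem_union, Set.mem_diff, hornedUmbrella, zAxis,
        Set.mem_setOf_eq, hornFun, if_pos h]
      constructor
      · intro hz
        left; exact pow_eq_zero_iff (by norm_num) |>.mp hz
      · rintro (hz | ⟨_, hL⟩)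
        · rw [hz]; ring
        · exact absurd h hL
    · have hD' : w.1 ^ 2 + w.2.1 ^ 4 + w.2.1 ^ 2 * w.2.2 ^ 4 ≠ 0 := ne_of_gt (Dpos w h)
      simp only [Set.mem_setOf_eq, Set.mem_union, Set.mem_diff, hornedUmbrella, zAxis,
        Set.mem_setOf_eq, hornFun, if_neg h]
      rw [div_eq_zero_iff]
      simp only [hD', or_false, mul_eq_zero, pow_eq_zero_iff (two_ne_zero (α := ℕ))]
      tauto
  refine ⟨hcont, hzero, ?_⟩
  rw [hzero]
  ext w
  simp only [Set.mem_inter_iff, Set.mem_union, Set.mem_diff, Set.mem_setOf_eq,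
    Set.mem_singleton_iff, hornedUmbrella, zAxis, Set.mem_setOf_eq]
  constructor
  · rintro ⟨hz | ⟨hU, hL⟩, hU'⟩
    · right
      rw [hz] at hU'
      have hx : w.1 = 0 := by nlinarith [sq_nonneg w.1, sq_nonneg (w.2.1 ^ 2)]
      have hy : w.2.1 = 0 := by
        have h4 : w.2.1 ^ 4 = 0 := by nlinarith [sq_nonneg w.1, sq_nonneg (w.2.1 ^ 2)]
        exact pow_eq_zero_iff (by norm_num) |>.mp h4
      exact Prod.ext hx (Prod.ext hy hz)
    · left; exact ⟨hU', hL⟩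
  · rintro (⟨hU, hL⟩ | h0)
    · exact ⟨Or.inr ⟨hU, hL⟩, hU⟩
    · rw [h0]; norm_num
end
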